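/- Let C_n be the cyclic quiver with vertices 0,1,…,n−1 and edges (i, i+1 mod n), let T = C[z_0,…,z_{n−1}, w_0,…,w_{n−1}], and let T_0 be the subring of invariants under the torus action z_i ↦ t_i t_{i+1}^{-1} z_i, w_i ↦ t_i^{-1} t_{i+1} w_i (indices mod n, with t_0 = 1). Then T_0 = C[z_0 w_0, z_1 w_1, …, z_{n−1} w_{n−1}, z_0 z_1⋯z_{n−1}, w_0 w_1⋯w_{n−1}], and the quotient of T_0 by the ideal T_0 ∩ ⟨z_i w_i − z_{i+1} w_{i+1} : i mod n⟩ is isomorphic to C[zw, z^n, w^n] ⊂ C[z,w], the invariant ring of the cyclic group Γ_n of order n acting on C^2 by (z,w) ↦ (ηz, η^{-1}w). -/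

import Mathlib

set_option linter.unusedSectionVars false
open MvPolynomial Pointwise

namespace Stmt14
variable (n : ℕ) [NeZero n]

noncomputable section

abbrev Rg := MvPolynomial (Fin n ⊕ Fin n) ℂ

def Gset : Set (Rg n) :=
  ({p | ∃ i : Fin n, p = X (Sum.inl i) * X (Sum.inr i)} ∪
       {∏ i : Fin n, X (Sum.inl i), ∏ i : Fin n, X (Sum.inr i)})

def φn : Rg n →ₐ[ℂ] MvPolynomial (Fin 2) ℂ :=
  aeval (Sum.elim (fun _ => X 0) (fun _ => X 1))

def Jn : Ideal (Rg n) :=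
  Ideal.span (Set.range fun i : Fin n =>
    (X (Sum.inl i) * X (Sum.inr i) -
      X (Sum.inl (i + 1)) * X (Sum.inr (i + 1)) : Rg n))

def uu : Rg n := X (Sum.inl 0) * X (Sum.inr 0)
def vv : Rg n := ∏ i : Fin n, X (Sum.inl i)
def wV : Rg n := ∏ i : Fin n, X (Sum.inr i)

def Fam (p : ℕ × ℤ) : Rg n :=
  uu n ^ p.1 * vv n ^ p.2.toNat * wV n ^ (-p.2).toNat

lemma J_le_ker : Jn n ≤ RingHom.ker (φn n) := by
  rw [Jn, Ideal.span_le]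
  rintro _ ⟨i, rfl⟩
  simp [RingHom.mem_ker, φn]

def πn : Rg n →+* (Rg n ⧸ Jn n) := Ideal.Quotient.mk (Jn n)

lemma mk_zw (i : Fin n) : πn n (X (Sum.inl i) * X (Sum.inr i)) = πn n (uu n) := by
  have hstep : ∀ j : Fin n, πn n (X (Sum.inl j) * X (Sum.inr j)) =
      πn n (X (Sum.inl (j+1)) * X (Sum.inr (j+1))) := fun j =>
    Ideal.Quotient.eq.mpr (Ideal.subset_span ⟨j, rfl⟩)
  obtain ⟨m, hm⟩ := i
  induction m with
  | zero => simp [uu, show (⟨0, hm⟩ : Fin n) = 0 from rfl]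
  | succ m ih =>
    have hm' : m < n := Nat.lt_of_succ_lt hm
    have : (⟨m+1, hm⟩ : Fin n) = ⟨m, hm'⟩ + 1 := by
      ext
      simp [Fin.add_def, Fin.val_one', Nat.mod_eq_of_lt (show 1 < n by omega),
        Nat.mod_eq_of_lt hm]
    rw [this, ← hstep ⟨m, hm'⟩, ih hm']

lemma mk_vw : πn n (vv n) * πn n (wV n) = πn n (uu n) ^ n := by
  rw [← map_mul, vv, wV, ← Finset.prod_mul_distrib, map_prod]
  simp_rw [mk_zw]
  simp


lemma vw_reduce {M : Type*} [CommRing M] (Bx V W : M) (nn : ℕ) (h : V * W = Bx ^ nn)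
    (m b c : ℕ) :
    V ^ (m + b) * W ^ (m + c) = Bx ^ (nn * m) * (V ^ b * W ^ c) := by
  have h2 : V ^ m * W ^ m = Bx ^ (nn * m) := by rw [← mul_pow, h, ← pow_mul]
  calc V ^ (m + b) * W ^ (m + c) = V ^ m * W ^ m * (V ^ b * W ^ c) := by
        rw [pow_add, pow_add]; ring
    _ = _ := by rw [h2]

lemma Fam_mul (p q : ℕ × ℤ) : ∃ r : ℕ × ℤ,
    πn n (Fam n p) * πn n (Fam n q) = πn n (Fam n r) := by
  obtain ⟨a, k⟩ := p; obtain ⟨a', k'⟩ := q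
  set m := min (k.toNat + k'.toNat) ((-k).toNat + (-k').toNat) with hm
  refine ⟨(a + a' + n * m, k + k'), ?_⟩
  simp only [Fam, map_mul, map_pow]
  have e1 : k.toNat + k'.toNat = m + (k + k').toNat := by omega
  have e2 : (-k).toNat + (-k').toNat = m + (-(k + k')).toNat := by omega
  set B := πn n (uu n); set V := πn n (vv n); set W := πn n (wV n)
  calc B ^ a * V ^ k.toNat * W ^ (-k).toNat * (B ^ a' * V ^ k'.toNat * W ^ (-k').toNat)
      = B ^ (a + a') * (V ^ (k.toNat + k'.toNat) * W ^ ((-k).toNat + (-k').toNat)) := by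
        rw [pow_add, pow_add, pow_add]; ring
    _ = B ^ (a + a') * (V ^ (m + (k + k').toNat) * W ^ (m + (-(k + k')).toNat)) := by
        rw [e1, e2]
    _ = B ^ (a + a') * (B ^ (n * m) * (V ^ (k + k').toNat * W ^ (-(k + k')).toNat)) := by
        rw [vw_reduce B V W n (mk_vw n)]
    _ = _ := by rw [pow_add _ (a + a') (n * m)]; ring

def expo (p : ℕ × ℤ) : Fin 2 →₀ ℕ :=
  Finsupp.single 0 (p.1 + n * p.2.toNat) + Finsupp.single 1 (p.1 + n * (-p.2).toNat)

omit [NeZero n] in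
lemma phi_X_inl (i : Fin n) : φn n (X (Sum.inl i)) = X 0 := by simp [φn]
omit [NeZero n] in
lemma phi_X_inr (i : Fin n) : φn n (X (Sum.inr i)) = X 1 := by simp [φn]

lemma phi_u : φn n (uu n) = X 0 * X 1 := by simp [uu, φn]
lemma phi_v : φn n (vv n) = (X 0 : MvPolynomial (Fin 2) ℂ) ^ n := by
  simp [vv, map_prod, phi_X_inl]
lemma phi_w : φn n (wV n) = (X 1 : MvPolynomial (Fin 2) ℂ) ^ n := by
  simp [wV, map_prod, phi_X_inr]

lemma phi_Fam (p : ℕ × ℤ) :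
    φn n (Fam n p) = monomial (expo n p) 1 := by
  obtain ⟨a, k⟩ := p
  simp only [Fam, map_mul, map_pow, phi_u, phi_v, phi_w, expo]
  have hm : (monomial (Finsupp.single 0 (a + n * k.toNat) +
      Finsupp.single 1 (a + n * (-k).toNat)) (1:ℂ)) =
      (X 0 : MvPolynomial (Fin 2) ℂ) ^ (a + n * k.toNat) * X 1 ^ (a + n * (-k).toNat) := by
    rw [X_pow_eq_monomial, X_pow_eq_monomial, monomial_mul, one_mul]
  rw [hm]
  ring

lemma expo_inj : Function.Injective (expo n) := by
  rintro ⟨a, k⟩ ⟨a', k'⟩ h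
  have h0 := congrArg (fun f => f 0) h
  have h1 := congrArg (fun f => f 1) h
  simp [expo, Finsupp.single_apply] at h0 h1
  have hn : (n : ℤ) ≠ 0 := by exact_mod_cast (NeZero.ne n)
  have hkk : k = k' := by
    have e0 : (a : ℤ) + n * k.toNat = a' + n * k'.toNat := by exact_mod_cast h0
    have e1 : (a : ℤ) + n * (-k).toNat = a' + n * (-k').toNat := by exact_mod_cast h1
    have t1 : (k.toNat : ℤ) - (-k).toNat = k := by omega
    have t2 : (k'.toNat : ℤ) - (-k').toNat = k' := by omega
    have : (n : ℤ) * k = (n : ℤ) * k' := by linear_combination e0 - e1 - (n:ℤ) * t1 + (n:ℤ) * t2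
    exact mul_left_cancel₀ hn this
  subst hkk
  have : a = a' := Nat.add_right_cancel (h0)
  simp [this]

lemma li_phiFam : LinearIndependent ℂ (fun p : ℕ × ℤ => φn n (Fam n p)) := by
  have : (fun p : ℕ × ℤ => φn n (Fam n p)) =
      fun p => (basisMonomials (Fin 2) ℂ) (expo n p) := by
    funext p; rw [phi_Fam, coe_basisMonomials]
  rw [this]
  exact (basisMonomials (Fin 2) ℂ).linearIndependent.comp _ (expo_inj n)


def Sspan : Submodule ℂ (Rg n ⧸ Jn n) := Submodule.span ℂ (Set.range fun q => πn n (Fam n q))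

lemma mem_Sspan_of_adjoin : ∀ p ∈ Algebra.adjoin ℂ (Gset n), πn n p ∈ Sspan n := by
  intro p hp
  induction hp using Algebra.adjoin_induction with
  | mem x hx =>
    rcases hx with ⟨i, rfl⟩ | hx
    · rw [mk_zw]
      apply Submodule.subset_span
      exact ⟨(1, 0), congrArg (πn n) (by simp [Fam, uu])⟩
    · rcases hx with rfl | rfl
      · exact Submodule.subset_span ⟨(0, 1), congrArg (πn n) (by simp [Fam, vv])⟩
      · exact Submodule.subset_span ⟨(0, -1), congrArg (πn n) (by simp [Fam, wV])⟩
  | algebraMap r =>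
    have h1 : πn n ((algebraMap ℂ (Rg n)) r) = r • πn n (Fam n (0, 0)) := by
      have hF : Fam n (0, 0) = (1 : Rg n) := by simp [Fam]
      rw [hF, map_one, ← Algebra.algebraMap_eq_smul_one]
      exact (IsScalarTower.algebraMap_apply ℂ (Rg n) (Rg n ⧸ Jn n) r).symm
    rw [h1]
    exact Submodule.smul_mem _ _ (Submodule.subset_span ⟨(0,0), rfl⟩)
  | add x y hx hy ihx ihy => rw [map_add]; exact Submodule.add_mem _ ihx ihy
  | mul x y hx hy ihx ihy =>
    rw [map_mul]
    have hss : (Set.range fun q => πn n (Fam n q)) * (Set.range fun q => πn n (Fam n q)) ⊆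
        (Set.range fun q => πn n (Fam n q)) := by
      rintro _ ⟨_, ⟨p₁, rfl⟩, _, ⟨q₁, rfl⟩, rfl⟩
      obtain ⟨r, hr⟩ := Fam_mul n p₁ q₁
      exact ⟨r, hr.symm⟩
    have : πn n x * πn n y ∈ Sspan n * Sspan n := Submodule.mul_mem_mul ihx ihy
    rw [Sspan, Submodule.span_mul_span] at this
    exact Submodule.span_le.mpr (hss.trans Submodule.subset_span) this

def φbar : (Rg n ⧸ Jn n) →ₐ[ℂ] MvPolynomial (Fin 2) ℂ :=
  Ideal.Quotient.liftₐ (Jn n) (φn n) (fun a ha => J_le_ker n ha)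

lemma φbar_mk (p : Rg n) : φbar n (πn n p) = φn n p := rfl

lemma mem_J_of_ker : ∀ p ∈ Algebra.adjoin ℂ (Gset n), φn n p = 0 → p ∈ Jn n := by
  intro p hp hker
  have h1 : πn n p ∈ Sspan n := mem_Sspan_of_adjoin n p hp
  rw [Sspan, Finsupp.mem_span_range_iff_exists_finsupp] at h1
  obtain ⟨c, hc⟩ := h1
  have h2 : φbar n (πn n p) = 0 := by rw [φbar_mk, hker]
  rw [← hc] at h2
  rw [map_finsuppSum] at h2
  simp_rw [map_smul, φbar_mk] at h2
  have hc0 : c = 0 := by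
    have := linearIndependent_iff.mp (li_phiFam n) c ?_
    · exact this
    · rw [Finsupp.linearCombination_apply]; exact h2
  rw [hc0] at hc
  simp at hc
  rw [← Ideal.Quotient.eq_zero_iff_mem]
  exact hc.symm


lemma image_G : φn n '' Gset n =
    ({X 0 * X 1, (X 0) ^ n, (X 1) ^ n} : Set (MvPolynomial (Fin 2) ℂ)) := by
  rw [Gset, Set.image_union]
  have h1 : φn n '' {p | ∃ i : Fin n, p = X (Sum.inl i) * X (Sum.inr i)} =
      {(X 0 * X 1 : MvPolynomial (Fin 2) ℂ)} := by
    ext y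
    constructor
    · rintro ⟨p, ⟨i, rfl⟩, rfl⟩
      simp [map_mul, phi_X_inl, phi_X_inr]
    · rintro rfl
      exact ⟨X (Sum.inl 0) * X (Sum.inr 0), ⟨0, rfl⟩, by simp [map_mul, phi_X_inl, phi_X_inr]⟩
  have h2 : φn n '' {∏ i : Fin n, X (Sum.inl i), ∏ i : Fin n, X (Sum.inr i)} =
      {((X 0) ^ n : MvPolynomial (Fin 2) ℂ), (X 1) ^ n} := by
    rw [Set.image_insert_eq, Set.image_singleton]
    rw [show φn n (∏ i : Fin n, X (Sum.inl i)) = (X 0 : MvPolynomial (Fin 2) ℂ) ^ n from phi_v n,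
      show φn n (∏ i : Fin n, X (Sum.inr i)) = (X 1 : MvPolynomial (Fin 2) ℂ) ^ n from phi_w n]
  rw [h1, h2, Set.singleton_union]

lemma iso_part :
    Nonempty ((Algebra.adjoin ℂ (Gset n) ⧸
        Ideal.comap (Algebra.adjoin ℂ (Gset n)).val (Jn n)) ≃ₐ[ℂ]
      (Algebra.adjoin ℂ
        ({X 0 * X 1, (X 0) ^ n, (X 1) ^ n} : Set (MvPolynomial (Fin 2) ℂ)))) := by
  set A := Algebra.adjoin ℂ (Gset n) with hA
  set tgt := Algebra.adjoin ℂ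
    ({X 0 * X 1, (X 0) ^ n, (X 1) ^ n} : Set (MvPolynomial (Fin 2) ℂ)) with htgt
  let f : A →ₐ[ℂ] MvPolynomial (Fin 2) ℂ := (φn n).comp A.val
  have hrange : f.range = tgt := by
    rw [htgt, ← image_G n]
    show ((φn n).comp A.val).range = _
    rw [AlgHom.range_comp, Subalgebra.range_val, hA, AlgHom.map_adjoin]
  have hmem : ∀ x, f x ∈ tgt := fun x => hrange ▸ AlgHom.mem_range_self f x
  let f' : A →ₐ[ℂ] tgt := f.codRestrict tgt hmem
  have hval : ∀ x, (f' x : MvPolynomial (Fin 2) ℂ) = f x := fun x => rfl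
  have hsurj : Function.Surjective f' := by
    rintro ⟨y, hy⟩
    rw [← hrange] at hy
    obtain ⟨x, hx⟩ := hy
    exact ⟨x, Subtype.ext hx⟩
  have hker : RingHom.ker f' = Ideal.comap A.val (Jn n) := by
    ext x
    simp only [RingHom.mem_ker, Ideal.mem_comap]
    constructor
    · intro h
      have h0 : f x = 0 := by rw [← hval x, h]; rfl
      exact mem_J_of_ker n x.val x.2 h0
    · intro h
      have h0 : f x = 0 := J_le_ker n h
      exact Subtype.ext (by rw [hval x, h0]; rfl)
  exact ⟨(Ideal.quotientEquivAlgOfEq ℂ hker.symm).trans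
    (Ideal.quotientKerAlgEquivOfSurjective hsurj)⟩


lemma prod_shift {M : Type*} [CommMonoid M] (h : Fin n → M) :
    ∏ i : Fin n, h (i + 1) = ∏ i, h i :=
  Fintype.prod_equiv (Equiv.addRight 1) _ _ (fun _ => rfl)

lemma prod_tt (t : Fin n → ℂˣ) :
    ∏ i : Fin n, ((t i : ℂ) * ((t (i + 1) : ℂ))⁻¹) = 1 := by
  have hcoe : ∀ i : Fin n, (t i : ℂ) * ((t (i + 1) : ℂ))⁻¹ =
      ((t i * (t (i + 1))⁻¹ : ℂˣ) : ℂ) := fun i => by simp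
  simp_rw [hcoe]
  have : ∏ i : Fin n, (t i * (t (i + 1))⁻¹) = 1 := by
    rw [Finset.prod_mul_distrib, Finset.prod_inv_distrib,
      prod_shift n (fun i => t i), mul_inv_cancel]
  rw [← Units.coe_prod, this, Units.val_one]

lemma prod_tt' (t : Fin n → ℂˣ) :
    ∏ i : Fin n, (((t i : ℂ))⁻¹ * (t (i + 1) : ℂ)) = 1 := by
  have hcoe : ∀ i : Fin n, ((t i : ℂ))⁻¹ * (t (i + 1) : ℂ) =
      (((t i)⁻¹ * t (i + 1) : ℂˣ) : ℂ) := fun i => by simp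
  simp_rw [hcoe]
  have : ∏ i : Fin n, ((t i)⁻¹ * t (i + 1)) = 1 := by
    rw [Finset.prod_mul_distrib, Finset.prod_inv_distrib,
      prod_shift n (fun i => t i), inv_mul_cancel]
  rw [← Units.coe_prod, this, Units.val_one]

lemma prod_smul' {ι M A : Type*} [CommMonoid M] [CommMonoid A] [MulAction A M]
    [IsScalarTower A M M] [SMulCommClass A M M]
    (s : Finset ι) (b : ι → A) (f : ι → M) :
    ∏ i ∈ s, b i • f i = (∏ i ∈ s, b i) • ∏ i ∈ s, f i := by
  classical
  induction s using Finset.cons_induction with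
  | empty => simp
  | cons a s ha ih =>
    rw [Finset.prod_cons, Finset.prod_cons, Finset.prod_cons, ih, smul_mul_smul_comm]

lemma scal_one (t : Fin n → ℂˣ) (i : Fin n) :
    ((t i : ℂ) * ((t (i + 1) : ℂ))⁻¹) * (((t i : ℂ))⁻¹ * (t (i + 1) : ℂ)) = 1 := by
  have h1 : (t i : ℂ) ≠ 0 := Units.ne_zero _
  have h2 : (t (i + 1) : ℂ) ≠ 0 := Units.ne_zero _
  field_simp

def cf (t : Fin n → ℂˣ) : Fin n ⊕ Fin n → ℂ :=
  Sum.elim (fun i => (t i : ℂ) * ((t (i + 1) : ℂ))⁻¹)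
    (fun i => ((t i : ℂ))⁻¹ * (t (i + 1) : ℂ))

lemma mono1 (d : Fin n ⊕ Fin n →₀ ℕ) :
    monomial d (1 : ℂ) = ∏ x : Fin n ⊕ Fin n, X x ^ d x := by
  rw [monomial_eq, C_1, one_mul, Finsupp.prod_fintype _ _ (fun i => pow_zero _)]

section act
variable (act : (Fin n → ℂˣ) →
      (MvPolynomial (Fin n ⊕ Fin n) ℂ →ₐ[ℂ] MvPolynomial (Fin n ⊕ Fin n) ℂ))
  (hact : ∀ t : Fin n → ℂˣ, act t = MvPolynomial.aeval (Sum.elim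
      (fun i : Fin n => ((t i : ℂ) * ((t (i + 1) : ℂ))⁻¹) •
        (X (Sum.inl i) : MvPolynomial (Fin n ⊕ Fin n) ℂ))
      (fun i : Fin n => (((t i : ℂ))⁻¹ * (t (i + 1) : ℂ)) • X (Sum.inr i))))

include hact

lemma inv_of_mem : ∀ p ∈ Algebra.adjoin ℂ (Gset n), ∀ t : Fin n → ℂˣ, act t p = p := by
  intro p hp
  induction hp using Algebra.adjoin_induction with
  | mem x hx =>
    intro t
    rw [hact]
    rcases hx with ⟨i, rfl⟩ | hx
    · simp only [map_mul, aeval_X, Sum.elim_inl, Sum.elim_inr]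
      rw [smul_mul_smul_comm, scal_one, one_smul]
    · rcases hx with rfl | rfl
      · rw [map_prod]
        simp only [aeval_X, Sum.elim_inl]
        rw [prod_smul', prod_tt, one_smul]
      · rw [map_prod]
        simp only [aeval_X, Sum.elim_inr]
        rw [prod_smul', prod_tt', one_smul]
  | algebraMap r => intro t; exact (act t).commutes r
  | add x y hx hy ihx ihy => intro t; rw [map_add, ihx t, ihy t]
  | mul x y hx hy ihx ihy => intro t; rw [map_mul, ihx t, ihy t]

lemma act_monomial (t : Fin n → ℂˣ) (d : Fin n ⊕ Fin n →₀ ℕ) (c : ℂ) :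
    act t (monomial d c) = monomial d (c * ∏ x, cf n t x ^ d x) := by
  rw [hact, aeval_monomial]
  have hg : (Sum.elim
      (fun i : Fin n => ((t i : ℂ) * ((t (i + 1) : ℂ))⁻¹) •
        (X (Sum.inl i) : MvPolynomial (Fin n ⊕ Fin n) ℂ))
      (fun i : Fin n => (((t i : ℂ))⁻¹ * (t (i + 1) : ℂ)) • X (Sum.inr i))) =
      fun x => cf n t x • X x := by
    funext x; cases x <;> rfl
  rw [hg]
  rw [Finsupp.prod_fintype _ _ (fun i => pow_zero _)]
  simp_rw [smul_pow]
  rw [prod_smul']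
  rw [Algebra.algebraMap_eq_smul_one]
  rw [smul_mul_assoc, one_mul, smul_smul, ← mono1]
  rw [smul_monomial]
  congr 1
  simp only [smul_eq_mul]
  ring

lemma coeff_act (t : Fin n → ℂˣ) (d : Fin n ⊕ Fin n →₀ ℕ)
    (p : MvPolynomial (Fin n ⊕ Fin n) ℂ) :
    coeff d (act t p) = (∏ x, cf n t x ^ d x) * coeff d p := by
  conv_lhs => rw [← support_sum_monomial_coeff p]
  rw [map_sum, coeff_sum]
  have : ∀ d' ∈ p.support, coeff d (act t (monomial d' (coeff d' p))) =
      if d' = d then (∏ x, cf n t x ^ d x) * coeff d' p else 0 := by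
    intro d' _
    rw [act_monomial n act hact, coeff_monomial]
    split_ifs with h
    · subst h; ring
    · rfl
  rw [Finset.sum_congr rfl this, Finset.sum_ite_eq' p.support d]
  split_ifs with h
  · rfl
  · rw [notMem_support_iff.mp h, mul_zero]

lemma wt_one (p : MvPolynomial (Fin n ⊕ Fin n) ℂ)
    (hp : ∀ t : Fin n → ℂˣ, t 0 = 1 → act t p = p)
    (d : Fin n ⊕ Fin n →₀ ℕ) (hd : d ∈ p.support) :
    ∀ t : Fin n → ℂˣ, t 0 = 1 → ∏ x, cf n t x ^ d x = 1 := by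
  intro t ht
  have h1 := congrArg (coeff d) (hp t ht)
  rw [coeff_act n act hact] at h1
  have h2 : (∏ x, cf n t x ^ d x) * coeff d p = 1 * coeff d p := by rw [h1, one_mul]
  exact mul_right_cancel₀ (mem_support_iff.mp hd) h2

end act

lemma wt_eq (t : Fin n → ℂˣ) (d : Fin n ⊕ Fin n →₀ ℕ) :
    ∏ x, cf n t x ^ d x =
      ∏ i : Fin n, ((t i : ℂ) ^ (d (Sum.inl i) + d (Sum.inr (i - 1))) *
        (((t i : ℂ))⁻¹) ^ (d (Sum.inr i) + d (Sum.inl (i - 1)))) := by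
  rw [Fintype.prod_sum_type]
  simp only [cf, Sum.elim_inl, Sum.elim_inr, mul_pow]
  rw [Finset.prod_mul_distrib, Finset.prod_mul_distrib]
  have r1 : ∏ i : Fin n, (((t (i + 1) : ℂ))⁻¹) ^ d (Sum.inl i) =
      ∏ i : Fin n, (((t i : ℂ))⁻¹) ^ d (Sum.inl (i - 1)) := by
    rw [← prod_shift n (fun i => (((t i : ℂ))⁻¹) ^ d (Sum.inl (i - 1)))]
    exact Finset.prod_congr rfl (fun i _ => by rw [add_sub_cancel_right])
  have r2 : ∏ i : Fin n, ((t (i + 1) : ℂ)) ^ d (Sum.inr i) =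
      ∏ i : Fin n, ((t i : ℂ)) ^ d (Sum.inr (i - 1)) := by
    rw [← prod_shift n (fun i => ((t i : ℂ)) ^ d (Sum.inr (i - 1)))]
    exact Finset.prod_congr rfl (fun i _ => by rw [add_sub_cancel_right])
  rw [r1, r2]
  simp_rw [pow_add, Finset.prod_mul_distrib]
  ring

lemma g_const (d : Fin n ⊕ Fin n →₀ ℕ)
    (hw : ∀ t : Fin n → ℂˣ, t 0 = 1 → ∏ x, cf n t x ^ d x = 1) :
    ∀ i : Fin n, (d (Sum.inl i) : ℤ) - d (Sum.inr i) =
      (d (Sum.inl 0) : ℤ) - d (Sum.inr 0) := by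
  have hjj : ∀ j : Fin n, j ≠ 0 →
      d (Sum.inl j) + d (Sum.inr (j - 1)) = d (Sum.inr j) + d (Sum.inl (j - 1)) := by
    intro j hj
    set s : ℂˣ := Units.mk0 (2 : ℂ) two_ne_zero with hs
    set t : Fin n → ℂˣ := fun i => if i = j then s else 1 with hts
    have ht0 : t 0 = 1 := by rw [hts]; simp [Ne.symm hj]
    have h := hw t ht0
    rw [wt_eq] at h
    have h2 : ∏ i : Fin n, ((t i : ℂ) ^ (d (Sum.inl i) + d (Sum.inr (i - 1))) *
        (((t i : ℂ))⁻¹) ^ (d (Sum.inr i) + d (Sum.inl (i - 1)))) =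
        (2:ℂ) ^ (d (Sum.inl j) + d (Sum.inr (j - 1))) *
          (((2:ℂ))⁻¹) ^ (d (Sum.inr j) + d (Sum.inl (j - 1))) := by
      rw [Finset.prod_eq_single_of_mem j (Finset.mem_univ j)
        (fun b _ hb => by simp [hts, hb])]
      simp [hts, hs]
    rw [h2] at h
    rw [inv_pow, mul_inv_eq_one₀ (pow_ne_zero _ two_ne_zero)] at h
    have h3 : ((2 ^ (d (Sum.inl j) + d (Sum.inr (j - 1))) : ℕ) : ℂ) =
        ((2 ^ (d (Sum.inr j) + d (Sum.inl (j - 1))) : ℕ) : ℂ) := by push_cast; exact h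
    exact Nat.pow_right_injective (le_refl 2) (Nat.cast_injective h3)
  have key : ∀ m (hm : m < n), (d (Sum.inl ⟨m, hm⟩) : ℤ) - d (Sum.inr ⟨m, hm⟩) =
      (d (Sum.inl 0) : ℤ) - d (Sum.inr 0) := by
    intro m
    induction m with
    | zero => intro hm; rfl
    | succ m ih =>
      intro hm
      have hm' : m < n := by omega
      have hne : (⟨m + 1, hm⟩ : Fin n) ≠ 0 := by
        simp [Fin.ext_iff]
      have hsub : (⟨m + 1, hm⟩ : Fin n) - 1 = ⟨m, hm'⟩ := by
        ext
        simp only [Fin.sub_def, Fin.val_one']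
        rw [Nat.mod_eq_of_lt (show 1 < n by omega)]
        rw [show n - 1 + (m + 1) = m + n from by omega, Nat.add_mod_right]
        exact Nat.mod_eq_of_lt hm'
      have h1 := hjj ⟨m + 1, hm⟩ hne
      rw [hsub] at h1
      have h2 := ih hm'
      omega
  intro i
  obtain ⟨m, hm⟩ := i
  exact key m hm

lemma hg1 (i : Fin n) : (X (Sum.inl i) * X (Sum.inr i) : Rg n) ∈ Gset n :=
  Or.inl ⟨i, rfl⟩

lemma hg2 : ((∏ i : Fin n, X (Sum.inl i)) : Rg n) ∈ Gset n :=
  Or.inr (Set.mem_insert _ _)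

lemma hg3 : ((∏ i : Fin n, X (Sum.inr i)) : Rg n) ∈ Gset n :=
  Or.inr (Set.mem_insert_of_mem _ rfl)

lemma monomial_mem (d : Fin n ⊕ Fin n →₀ ℕ) (c : ℂ)
    (h : ∀ i : Fin n, (d (Sum.inl i) : ℤ) - d (Sum.inr i) =
      (d (Sum.inl 0) : ℤ) - d (Sum.inr 0)) :
    monomial d c ∈ Algebra.adjoin ℂ (Gset n) := by
  have hc : monomial d c = c • monomial d (1 : ℂ) := by simp [smul_monomial]
  rw [hc]
  apply Subalgebra.smul_mem
  set k := (d (Sum.inl 0) : ℤ) - d (Sum.inr 0) with hk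
  rcases le_or_gt 0 k with hkp | hkn
  · have ha : ∀ i, d (Sum.inl i) = d (Sum.inr i) + k.toNat := by
      intro i; have := h i; omega
    have heq : monomial d (1 : ℂ) =
        (∏ i : Fin n, (X (Sum.inl i) * X (Sum.inr i)) ^ d (Sum.inr i)) *
          (∏ i : Fin n, (X (Sum.inl i) : Rg n)) ^ k.toNat := by
      rw [mono1, Fintype.prod_sum_type, ← Finset.prod_mul_distrib]
      conv_rhs => rw [← Finset.prod_pow, ← Finset.prod_mul_distrib]
      refine Finset.prod_congr rfl (fun i _ => ?_)
      rw [ha i, mul_pow, pow_add]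
      ring
    rw [heq]
    exact Subalgebra.mul_mem _
      (Subalgebra.prod_mem _ fun i _ => Subalgebra.pow_mem _
        (Algebra.subset_adjoin (hg1 n i)) _)
      (Subalgebra.pow_mem _ (Algebra.subset_adjoin (hg2 n)) _)
  · have hb : ∀ i, d (Sum.inr i) = d (Sum.inl i) + (-k).toNat := by
      intro i; have := h i; omega
    have heq : monomial d (1 : ℂ) =
        (∏ i : Fin n, (X (Sum.inl i) * X (Sum.inr i)) ^ d (Sum.inl i)) *
          (∏ i : Fin n, (X (Sum.inr i) : Rg n)) ^ (-k).toNat := by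
      rw [mono1, Fintype.prod_sum_type, ← Finset.prod_mul_distrib]
      conv_rhs => rw [← Finset.prod_pow, ← Finset.prod_mul_distrib]
      refine Finset.prod_congr rfl (fun i _ => ?_)
      rw [hb i, mul_pow, pow_add]
      ring
    rw [heq]
    exact Subalgebra.mul_mem _
      (Subalgebra.prod_mem _ fun i _ => Subalgebra.pow_mem _
        (Algebra.subset_adjoin (hg1 n i)) _)
      (Subalgebra.pow_mem _ (Algebra.subset_adjoin (hg3 n)) _)

lemma mem_of_inv (act : (Fin n → ℂˣ) →
      (MvPolynomial (Fin n ⊕ Fin n) ℂ →ₐ[ℂ] MvPolynomial (Fin n ⊕ Fin n) ℂ))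
    (hact : ∀ t : Fin n → ℂˣ, act t = MvPolynomial.aeval (Sum.elim
      (fun i : Fin n => ((t i : ℂ) * ((t (i + 1) : ℂ))⁻¹) •
        (X (Sum.inl i) : MvPolynomial (Fin n ⊕ Fin n) ℂ))
      (fun i : Fin n => (((t i : ℂ))⁻¹ * (t (i + 1) : ℂ)) • X (Sum.inr i))))
    (p : MvPolynomial (Fin n ⊕ Fin n) ℂ)
    (hp : ∀ t : Fin n → ℂˣ, t 0 = 1 → act t p = p) :
    p ∈ Algebra.adjoin ℂ (Gset n) := by
  rw [← support_sum_monomial_coeff p]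
  refine Subalgebra.sum_mem _ (fun d hd => ?_)
  exact monomial_mem n d _ (g_const n d (wt_one n act hact p hp d hd))

end
end Stmt14


/-- For the cyclic quiver `C_n`: the invariant ring `T₀` of the symplectic torus action
(with `t₀ = 1`) on `T = ℂ[z₀,…,z_{n-1},w₀,…,w_{n-1}]` is
`ℂ[z₀w₀, …, z_{n-1}w_{n-1}, z₀⋯z_{n-1}, w₀⋯w_{n-1}]`, and its quotient by
`T₀ ∩ ⟨zᵢwᵢ - z_{i+1}w_{i+1}⟩` is isomorphic to `ℂ[zw, zⁿ, wⁿ] ⊆ ℂ[z,w]`, the invariant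
ring of the cyclic group `Γ_n` acting by `(z,w) ↦ (ηz, η⁻¹w)`. -/
theorem stmt_14 (n : ℕ) [NeZero n]
    (act : (Fin n → ℂˣ) →
      (MvPolynomial (Fin n ⊕ Fin n) ℂ →ₐ[ℂ] MvPolynomial (Fin n ⊕ Fin n) ℂ))
    (hact : ∀ t : Fin n → ℂˣ, act t = MvPolynomial.aeval (Sum.elim
      (fun i : Fin n => ((t i : ℂ) * ((t (i + 1) : ℂ))⁻¹) •
        (X (Sum.inl i) : MvPolynomial (Fin n ⊕ Fin n) ℂ))
      (fun i : Fin n => (((t i : ℂ))⁻¹ * (t (i + 1) : ℂ)) • X (Sum.inr i))))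
    (T0 : Subalgebra ℂ (MvPolynomial (Fin n ⊕ Fin n) ℂ))
    (hT0 : T0 = Algebra.adjoin ℂ
      ({p | ∃ i : Fin n, p = X (Sum.inl i) * X (Sum.inr i)} ∪
       {∏ i : Fin n, X (Sum.inl i), ∏ i : Fin n, X (Sum.inr i)})) :
    ((T0 : Set (MvPolynomial (Fin n ⊕ Fin n) ℂ)) =
        {p | ∀ t : Fin n → ℂˣ, t 0 = 1 → act t p = p}) ∧
    Nonempty ((T0 ⧸ Ideal.comap T0.val (Ideal.span (Set.range fun i : Fin n =>
        (X (Sum.inl i) * X (Sum.inr i) -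
          X (Sum.inl (i + 1)) * X (Sum.inr (i + 1)) :
            MvPolynomial (Fin n ⊕ Fin n) ℂ)))) ≃ₐ[ℂ]
      (Algebra.adjoin ℂ
        ({X 0 * X 1, (X 0) ^ n, (X 1) ^ n} : Set (MvPolynomial (Fin 2) ℂ)))) := by
  subst hT0
  refine ⟨?_, Stmt14.iso_part n⟩
  ext p
  constructor
  · intro hp t _
    exact Stmt14.inv_of_mem n act hact p hp t
  · intro hp
    exact Stmt14.mem_of_inv n act hact p hp
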